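/- arXiv:1112.4151 — 2 statements merged into one kernel-verified Lean document; each statement's English description precedes it below -/
import Mathlib

section
/- The Harer–Zagier recursion (m+1)c_g(m) = 2(2m-1)c_g(m-1) + (2m-1)(m-1)(2m-3)c_{g-1}(m-2) is equivalent to the differential equation z(1-4z)·C_g'(z) + (1-2z)·C_g(z) = z²·(4z³·C_{g-1}'''(z) + 24z²·C_{g-1}''(z) + 27z·C_{g-1}'(z) + 3·C_{g-1}(z)) for the generating functions C_g(z) = Σ_m c_g(m) z^m, with initial condition C_g(0) = 0 for g ≥ 1. -/
open PowerSeries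

lemma hz_coeff_derivativeFun (f : ℚ⟦X⟧) (n : ℕ) :
    coeff n (derivativeFun f) = coeff (n + 1) f * (n + 1) :=
  coeff_derivative f n

lemma hz_coeff_lhs (a : ℕ → ℚ) (n : ℕ) :
    coeff n (X * (1 - 4 * X) * derivativeFun (mk a) + (1 - 2 * X) * (mk a : ℚ⟦X⟧)) =
    ((n:ℚ)+1) * a n - (if 1 ≤ n then (4*(n:ℚ)-2) * a (n-1) else 0) := by
  have e4 : (4 : ℚ⟦X⟧) = C (R := ℚ) 4 := (map_ofNat (C (R := ℚ)) 4).symm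
  have e2 : (2 : ℚ⟦X⟧) = C (R := ℚ) 2 := (map_ofNat (C (R := ℚ)) 2).symm
  have h : X * (1 - 4 * X) * derivativeFun (mk a) + (1 - 2 * X) * (mk a : ℚ⟦X⟧)
      = X ^ 1 * derivativeFun (mk a) + mk a
        - C (R := ℚ) 4 * (X ^ 2 * derivativeFun (mk a)) - C (R := ℚ) 2 * (X ^ 1 * mk a) := by
    rw [e4, e2]; ring
  rw [h]
  simp only [map_sub, map_add, coeff_C_mul, coeff_X_pow_mul', hz_coeff_derivativeFun, coeff_mk]
  rcases n with _ | n
  · norm_num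
  · rcases n with _ | n
    · norm_num; ring
    · simp only [show 1 ≤ n + 2 by omega, show 2 ≤ n + 2 by omega, if_true,
        show n + 2 - 1 = n + 1 from rfl, show n + 2 - 2 = n from rfl,
        show n + 1 + 1 = n + 2 from rfl]
      push_cast
      ring

lemma hz_coeff_rhs (b : ℕ → ℚ) (n : ℕ) :
    coeff n (X ^ 2 * (4 * X ^ 3 * derivativeFun (derivativeFun (derivativeFun (mk b))) +
          24 * X ^ 2 * derivativeFun (derivativeFun (mk b)) +
          27 * X * derivativeFun (mk b) + 3 * (mk b : ℚ⟦X⟧))) =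
    if 2 ≤ n then (2*(n:ℚ)-1)*((n:ℚ)-1)*(2*(n:ℚ)-3) * b (n-2) else 0 := by
  have e4 : (4 : ℚ⟦X⟧) = C (R := ℚ) 4 := (map_ofNat (C (R := ℚ)) 4).symm
  have e24 : (24 : ℚ⟦X⟧) = C (R := ℚ) 24 := (map_ofNat (C (R := ℚ)) 24).symm
  have e27 : (27 : ℚ⟦X⟧) = C (R := ℚ) 27 := (map_ofNat (C (R := ℚ)) 27).symm
  have e3 : (3 : ℚ⟦X⟧) = C (R := ℚ) 3 := (map_ofNat (C (R := ℚ)) 3).symm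
  have h : X ^ 2 * (4 * X ^ 3 * derivativeFun (derivativeFun (derivativeFun (mk b))) +
          24 * X ^ 2 * derivativeFun (derivativeFun (mk b)) +
          27 * X * derivativeFun (mk b) + 3 * (mk b : ℚ⟦X⟧))
      = C (R := ℚ) 4 * (X ^ 5 * derivativeFun (derivativeFun (derivativeFun (mk b))))
        + C (R := ℚ) 24 * (X ^ 4 * derivativeFun (derivativeFun (mk b)))
        + C (R := ℚ) 27 * (X ^ 3 * derivativeFun (mk b))
        + C (R := ℚ) 3 * (X ^ 2 * mk b) := by
    rw [e4, e24, e27, e3]; ring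
  rw [h]
  simp only [map_add, coeff_C_mul, coeff_X_pow_mul', hz_coeff_derivativeFun, coeff_mk]
  rcases n with _ | n
  · norm_num
  rcases n with _ | n
  · norm_num
  rcases n with _ | n
  · norm_num
  rcases n with _ | n
  · norm_num; ring
  rcases n with _ | n
  · norm_num; ring
  · simp only [show 2 ≤ n + 5 by omega, show 3 ≤ n + 5 by omega, show 4 ≤ n + 5 by omega,
      show 5 ≤ n + 5 by omega, if_true,
      show n + 5 - 2 = n + 3 from rfl, show n + 5 - 3 = n + 2 from rfl,
      show n + 5 - 4 = n + 1 from rfl, show n + 5 - 5 = n from rfl,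
      show n + 1 + 1 = n + 2 from rfl, show n + 2 + 1 = n + 3 from rfl]
    push_cast
    ring

/-- The Harer–Zagier recursion for the coefficients `c g m` is equivalent to the
differential equation
`z(1-4z)·C_g'(z) + (1-2z)·C_g(z) = z²(4z³C_{g-1}''' + 24z²C_{g-1}'' + 27zC_{g-1}' + 3C_{g-1})`
for the generating functions `C_g(z) = Σ_m c_g(m) z^m`, with initial condition
`C_g(0) = 0` for `g ≥ 1`. -/
theorem harer_zagier_recursion_iff_ODE (c : ℕ → ℕ → ℚ)
    (C : ℕ → PowerSeries ℚ) (hC : ∀ g, C g = PowerSeries.mk (c g)) :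
    ((∀ g : ℕ, 1 ≤ g → ∀ m : ℕ,
        ((m : ℚ) + 2) * c g (m + 1) =
          2 * (2 * (m : ℚ) + 1) * c g m +
            (2 * (m : ℚ) + 1) * (m : ℚ) * (2 * (m : ℚ) - 1) * c (g - 1) (m - 1)) ∧
      (∀ g : ℕ, 1 ≤ g → c g 0 = 0))
    ↔
    (∀ g : ℕ, 1 ≤ g →
      X * (1 - 4 * X) * derivativeFun (C g) + (1 - 2 * X) * C g =
        X ^ 2 * (4 * X ^ 3 * derivativeFun (derivativeFun (derivativeFun (C (g - 1)))) +
          24 * X ^ 2 * derivativeFun (derivativeFun (C (g - 1))) +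
          27 * X * derivativeFun (C (g - 1)) + 3 * C (g - 1)) ∧
      PowerSeries.constantCoeff (C g) = 0) := by
  have hc0 : ∀ g, PowerSeries.constantCoeff (C g) = c g 0 := by
    intro g; rw [hC g]; simp [← coeff_zero_eq_constantCoeff]
  constructor
  · rintro ⟨hrec, h0⟩ g hg
    refine ⟨?_, by rw [hc0]; exact h0 g hg⟩
    ext n
    rw [hC g, hC (g-1), hz_coeff_lhs, hz_coeff_rhs]
    rcases n with _ | m
    · simp [h0 g hg]
    · have hr := hrec g hg m
      rcases m with _ | m
      · norm_num
        norm_num at hr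
        linarith
      · simp only [show 1 ≤ m + 2 by omega, show 2 ≤ m + 2 by omega, if_true,
          show m + 2 - 1 = m + 1 from rfl, show m + 2 - 2 = m from rfl] at *
        simp only [show m + 1 - 1 = m from rfl] at hr
        push_cast at hr ⊢
        linarith
  · intro h
    have h0 : ∀ g : ℕ, 1 ≤ g → c g 0 = 0 := by
      intro g hg; rw [← hc0]; exact (h g hg).2
    refine ⟨?_, h0⟩
    intro g hg m
    have heq := (h g hg).1
    rw [hC g, hC (g-1)] at heq
    have hco := congrArg (coeff (m+1)) heq
    rw [hz_coeff_lhs, hz_coeff_rhs] at hco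
    rcases m with _ | m
    · norm_num at hco ⊢
      linarith
    · simp only [show 1 ≤ m + 2 by omega, show 2 ≤ m + 2 by omega, if_true,
        show m + 2 - 1 = m + 1 from rfl, show m + 2 - 2 = m from rfl] at hco
      simp only [show m + 1 - 1 = m from rfl]
      push_cast at hco ⊢
      linarith
end

section
/- Every shadow of genus g ≥ 1 (over one backbone) contains at least 2g arcs and at most 6g - 2 arcs; consequently, for fixed genus g, there exist only finitely many shadows of genus g. -/
open PowerSeries Finset

/-- Number of orbits of a function on a type. -/
noncomputable def numOrbits {α : Type*} (f : α → α) : ℕ :=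
  Nat.card (Quotient (Relation.EqvGen.setoid (fun x y => f x = y)))

/-- Number of boundary components of the fatgraph of a chord diagram given by
an involution `μ` on `Fin N` (backbone collapsed to one vertex). -/
noncomputable def numBoundary {N : ℕ} (μ : Equiv.Perm (Fin N)) : ℕ :=
  numOrbits (fun v => finRotate N (μ v))

/-- Genus of a diagram on `N` vertices: `r = N/2 + 1 - 2g`. -/
noncomputable def diagGenus {N : ℕ} (μ : Equiv.Perm (Fin N)) : ℕ :=
  (N / 2 + 1 - numBoundary μ) / 2

/-- `μ` is a perfect matching: a fixed-point-free involution. -/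
def IsMatching {N : ℕ} (μ : Equiv.Perm (Fin N)) : Prop :=
  (∀ i, μ (μ i) = i) ∧ ∀ i, μ i ≠ i

/-- the number of perfect matchings on `2m` points of genus `g`. -/
noncomputable def cCount (g m : ℕ) : ℕ :=
  Nat.card {μ : Equiv.Perm (Fin (2 * m)) // IsMatching μ ∧ diagGenus μ = g}
/-- arc left endpoints: `i` is the left endpoint of an arc of `μ`. -/
def IsLeft {N : ℕ} (μ : Equiv.Perm (Fin N)) (i : Fin N) : Prop :=
  (i : ℕ) < (μ i : ℕ)

/-- the arcs with left endpoints `i` and `k` cross: `i < k < μ i < μ k`. -/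
def Cross {N : ℕ} (μ : Equiv.Perm (Fin N)) (i k : Fin N) : Prop :=
  (i : ℕ) < (k : ℕ) ∧ (k : ℕ) < (μ i : ℕ) ∧ (μ i : ℕ) < (μ k : ℕ)

def CrossSym {N : ℕ} (μ : Equiv.Perm (Fin N)) (i k : Fin N) : Prop :=
  Cross μ i k ∨ Cross μ k i

/-- arcs `i`, `k` belong to the same connected component of the crossing graph. -/
def SameComp {N : ℕ} (μ : Equiv.Perm (Fin N)) : Fin N → Fin N → Prop :=
  Relation.ReflTransGen (CrossSym μ)

open Classical in
/-- the set of vertices lying on arcs in the crossing component of arc `i`. -/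
noncomputable def compVerts {N : ℕ} (μ : Equiv.Perm (Fin N)) (i : Fin N) : Finset (Fin N) :=
  Finset.univ.filter
    (fun v => (μ v ≠ v) ∧ SameComp μ i (if (v : ℕ) < (μ v : ℕ) then v else μ v))

/-- the genus of the sub-diagram of `μ` induced on a `μ`-closed vertex set `V`. -/
noncomputable def subGenus {N : ℕ} (μ : Equiv.Perm (Fin N)) (V : Finset (Fin N)) : ℕ :=
  let e := V.orderIsoOfFin rfl
  let f : Fin V.card → Fin V.card :=
    fun j => if h : μ (e j) ∈ V then e.symm ⟨μ (e j), h⟩ else j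
  (V.card / 2 + 1 - numOrbits (fun j => finRotate V.card (f j))) / 2

/-- every irreducible shadow (crossing component) of `μ` has genus at most `γ`. -/
def GammaBounded {N : ℕ} (γ : ℕ) (μ : Equiv.Perm (Fin N)) : Prop :=
  ∀ i : Fin N, IsLeft μ i → subGenus μ (compVerts μ i) ≤ γ

/-- no two parallel adjacent arcs, i.e. all stacks have length one. -/
def NoStack {N : ℕ} (μ : Equiv.Perm (Fin N)) : Prop :=
  ¬ ∃ i k : Fin N, IsLeft μ i ∧ IsLeft μ k ∧ (k : ℕ) = (i : ℕ) + 1 ∧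
      (μ k : ℕ) + 1 = (μ i : ℕ)

/-- a shadow: a perfect matching in which every arc crosses some arc
and which has no stacks of length greater than one. -/
def IsShadow {N : ℕ} (μ : Equiv.Perm (Fin N)) : Prop :=
  IsMatching μ ∧ (∀ i, IsLeft μ i → ∃ k, CrossSym μ i k) ∧ NoStack μ

/-- irreducibility: the crossing graph is connected. -/
def IrreducibleShadowDiagram {N : ℕ} (μ : Equiv.Perm (Fin N)) : Prop :=
  ∀ i k : Fin N, IsLeft μ i → IsLeft μ k → SameComp μ i k

/-- the number of irreducible shadows of genus `g` with `m` arcs. -/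
noncomputable def iCount (g m : ℕ) : ℕ :=
  Nat.card {μ : Equiv.Perm (Fin (2 * m)) // IsShadow μ ∧ IrreducibleShadowDiagram μ ∧ diagGenus μ = g}

private lemma eqvGen_iff_sameCycle {α : Type*} (σ : Equiv.Perm α) (a b : α) :
    Relation.EqvGen (fun x y => σ x = y) a b ↔ σ.SameCycle a b := by
  constructor
  · intro h
    induction h with
    | rel x y h => exact ⟨1, by simpa using h⟩
    | refl x => exact Equiv.Perm.SameCycle.refl σ x
    | symm x y _ ih => exact ih.symm
    | trans x y z _ _ ih1 ih2 => exact ih1.trans ih2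
  · rintro ⟨n, rfl⟩
    have key : ∀ (k : ℕ) (x : α), Relation.EqvGen (fun x y => σ x = y) x ((σ ^ k) x) := by
      intro k x
      induction k with
      | zero => simpa using Relation.EqvGen.refl x
      | succ k ih =>
        refine Relation.EqvGen.trans _ _ _ ih (Relation.EqvGen.rel _ _ ?_)
        simp [pow_succ', Equiv.Perm.mul_apply]
    cases n with
    | ofNat k => simpa using key k a
    | negSucc k =>
      have h1 := key (k+1) ((σ ^ Int.negSucc k) a)
      have h2 : (σ ^ (k+1)) ((σ ^ Int.negSucc k) a) = a := by
        rw [zpow_negSucc]; exact Equiv.apply_symm_apply _ _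
      rw [h2] at h1
      exact Relation.EqvGen.symm _ _ h1

private lemma finRotate_val_cases {N : ℕ} (hN : 1 ≤ N) {u v : Fin N}
    (h : finRotate N u = v) :
    ((u : ℕ) + 1 = (v : ℕ)) ∨ ((u : ℕ) = N - 1 ∧ (v : ℕ) = 0) := by
  cases N with
  | zero => omega
  | succ n =>
    rw [finRotate_succ_apply] at h
    subst h
    have hv := Fin.val_add_one u
    by_cases h : u = Fin.last n
    · right
      refine ⟨by rw [h]; simp, by rw [hv, if_pos h]⟩
    · left
      rw [hv, if_neg h]

open Finset in
private lemma shadow_key {m : ℕ} (hm : 1 ≤ m) (μ : Equiv.Perm (Fin (2 * m)))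
    (hsh : IsShadow μ) :
    1 ≤ numBoundary μ ∧ 3 * numBoundary μ ≤ 2 * m + 1 ∧
      ∃ k, numBoundary μ + 7 * m = 2 * k + 1 := by
  classical
  obtain ⟨⟨hμ2, hμne⟩, hcross, hnostack⟩ := hsh
  set σ : Equiv.Perm (Fin (2*m)) := finRotate (2*m) * μ with hσdef
  have hN : 1 ≤ 2*m := by omega
  -- no fixed points
  have nofix : ∀ v : Fin (2*m), σ v ≠ v := by
    intro v hv
    rw [hσdef, Equiv.Perm.mul_apply] at hv
    rcases finRotate_val_cases hN hv with h | h
    · have hil : IsLeft μ (μ v) := by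
        unfold IsLeft; rw [hμ2]; omega
      obtain ⟨k, hk⟩ := hcross _ hil
      have hklt := (μ k).isLt
      simp only [CrossSym, Cross, hμ2] at hk
      rcases hk with ⟨h1, h2, h3⟩ | ⟨h1, h2, h3⟩ <;> omega
    · have hil : IsLeft μ v := by
        unfold IsLeft; omega
      obtain ⟨k, hk⟩ := hcross _ hil
      have hklt := (μ k).isLt
      have hklt2 := k.isLt
      simp only [CrossSym, Cross, hμ2] at hk
      rcases hk with ⟨h1, h2, h3⟩ | ⟨h1, h2, h3⟩ <;> omega
  -- two-cycles pass through 0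
  have key2 : ∀ v w : Fin (2*m), (v:ℕ) < (w:ℕ) → (μ v:ℕ)+1 = (w:ℕ) → (μ w:ℕ)+1 = (v:ℕ) → False := by
    intro v w hlt ha hb
    refine hnostack ⟨μ w, v, ?_, ?_, ?_, ?_⟩
    · unfold IsLeft; rw [hμ2]; omega
    · unfold IsLeft
      have hne : (μ v : ℕ) ≠ (v:ℕ) := fun hh => hμne v (Fin.ext hh)
      omega
    · omega
    · rw [hμ2]; omega
  have twofix : ∀ v : Fin (2*m), σ (σ v) = v → (v : ℕ) = 0 ∨ ((σ v : ℕ)) = 0 := by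
    intro v hvv
    by_contra hcon
    push_neg at hcon
    obtain ⟨hv0, hw0⟩ := hcon
    have h1 : finRotate (2*m) (μ v) = σ v := (Equiv.Perm.mul_apply _ _ _).symm
    have h2 : finRotate (2*m) (μ (σ v)) = v := by
      have := (Equiv.Perm.mul_apply (finRotate (2*m)) μ (σ v)).symm
      rw [← hσdef] at this
      rw [this, hvv]
    rcases finRotate_val_cases hN h1 with ha | ha
    swap
    · exact hw0 ha.2
    rcases finRotate_val_cases hN h2 with hb | hb
    swap
    · exact hv0 hb.2
    have hne : v ≠ σ v := fun h => nofix v h.symm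
    have hnev : (v:ℕ) ≠ (σ v : ℕ) := fun h => hne (Fin.ext h)
    rcases Nat.lt_or_ge (v:ℕ) ((σ v : ℕ)) with h | h
    · exact key2 v (σ v) h ha hb
    · exact key2 (σ v) v (by omega) hb ha
  -- setoid and quotient
  set st : Setoid (Fin (2*m)) := Relation.EqvGen.setoid (fun x y => σ x = y) with hst
  haveI : Fintype (Quotient st) := Fintype.ofFinite _
  have hnb : numBoundary μ = Fintype.card (Quotient st) := by
    unfold numBoundary numOrbits
    have hfun : (fun v => finRotate (2*m) (μ v)) = ⇑σ := by
      funext v; exact (Equiv.Perm.mul_apply _ _ _).symm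
    rw [hfun]
    show Nat.card (Quotient st) = _
    exact Nat.card_eq_fintype_card
  set z : Fin (2*m) := ⟨0, by omega⟩ with hz
  have hzval : (z : ℕ) = 0 := by rw [hz]
  set q0 : Quotient st := Quotient.mk st z with hq0
  -- class equalities
  have hstep : ∀ x : Fin (2*m), Quotient.mk st (σ x) = Quotient.mk st x := by
    intro x
    exact Quotient.sound (Relation.EqvGen.symm _ _ (Relation.EqvGen.rel _ _ rfl))
  -- fiber bound
  have hfiber : ∀ q : Quotient st,
      3 ≤ (univ.filter (fun x => Quotient.mk st x = q)).card + (if q = q0 then 1 else 0) := by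
    intro q
    obtain ⟨x, hx⟩ := Quotient.exists_rep q
    have hx1 : Quotient.mk st x = q := hx
    have hsx : Quotient.mk st (σ x) = q := by rw [hstep]; exact hx1
    have hssx : Quotient.mk st (σ (σ x)) = q := by rw [hstep]; exact hsx
    have d1 : σ x ≠ x := nofix x
    have d2 : σ (σ x) ≠ σ x := fun h => nofix x (σ.injective h)
    by_cases hq : q = q0
    · have hsub : ({x, σ x} : Finset (Fin (2*m))) ⊆ univ.filter (fun y => Quotient.mk st y = q) := by
        intro y hy
        rcases Finset.mem_insert.mp hy with rfl | hy
        · exact Finset.mem_filter.mpr ⟨Finset.mem_univ _, hx1⟩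
        · rw [Finset.mem_singleton] at hy
          subst hy
          exact Finset.mem_filter.mpr ⟨Finset.mem_univ _, hsx⟩
      have h2 : 2 ≤ (univ.filter (fun y => Quotient.mk st y = q)).card := by
        calc 2 = ({x, σ x} : Finset (Fin (2*m))).card := (Finset.card_pair (Ne.symm d1)).symm
        _ ≤ _ := Finset.card_le_card hsub
      rw [if_pos hq]; omega
    · have d3 : σ (σ x) ≠ x := by
        intro h
        rcases twofix x h with h0 | h0
        · refine hq ?_
          rw [← hx1, hq0]
          exact congrArg _ (Fin.ext (by rw [hzval]; exact h0))
        · refine hq ?_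
          rw [← hsx, hq0]
          exact congrArg _ (Fin.ext (by rw [hzval]; exact h0))
      have hsub : ({x, σ x, σ (σ x)} : Finset (Fin (2*m))) ⊆
          univ.filter (fun y => Quotient.mk st y = q) := by
        intro y hy
        rcases Finset.mem_insert.mp hy with rfl | hy
        · exact Finset.mem_filter.mpr ⟨Finset.mem_univ _, hx1⟩
        rcases Finset.mem_insert.mp hy with rfl | hy
        · exact Finset.mem_filter.mpr ⟨Finset.mem_univ _, hsx⟩
        rw [Finset.mem_singleton] at hy
        subst hy
        exact Finset.mem_filter.mpr ⟨Finset.mem_univ _, hssx⟩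
      have hcard3 : ({x, σ x, σ (σ x)} : Finset (Fin (2*m))).card = 3 := by
        rw [Finset.card_insert_of_notMem, Finset.card_pair (Ne.symm d2)]
        intro hmem
        rcases Finset.mem_insert.mp hmem with h | h
        · exact d1 h.symm
        · rw [Finset.mem_singleton] at h
          exact d3 h.symm
      have h3 : 3 ≤ (univ.filter (fun y => Quotient.mk st y = q)).card := by
        calc 3 = _ := hcard3.symm
        _ ≤ _ := Finset.card_le_card hsub
      rw [if_neg hq]; omega
  -- total count
  have hcount : (2*m : ℕ) = ∑ q : Quotient st, (univ.filter (fun x => Quotient.mk st x = q)).card := by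
    have := Finset.card_eq_sum_card_fiberwise
      (f := fun x : Fin (2*m) => Quotient.mk st x) (t := univ) (s := univ)
      (fun x _ => Finset.mem_univ _)
    simpa using this
  have hsum := Finset.sum_le_sum (fun q (_ : q ∈ univ) => hfiber q)
  rw [Finset.sum_add_distrib, Finset.sum_const, Finset.card_univ, Finset.sum_ite_eq' univ q0 (fun _ => 1)] at hsum
  rw [if_pos (Finset.mem_univ q0), ← hcount] at hsum
  simp only [smul_eq_mul] at hsum
  -- hsum : Fintype.card (Quotient st) * 3 ≤ 2*m + 1
  have hb2 : 3 * numBoundary μ ≤ 2*m + 1 := by rw [hnb]; omega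
  have hb1 : 1 ≤ numBoundary μ := by
    rw [hnb]
    exact Fintype.card_pos_iff.mpr ⟨q0⟩
  refine ⟨hb1, hb2, ?_⟩
  -- relate card of quotient to cycle count
  have hsupp : σ.support = Finset.univ := by
    ext v; simp [Equiv.Perm.mem_support, nofix v]
  let F : Quotient st → {c // c ∈ σ.cycleFactorsFinset} :=
    Quotient.lift (fun x => ⟨σ.cycleOf x,
        Equiv.Perm.cycleOf_mem_cycleFactorsFinset_iff.mpr (by rw [hsupp]; exact Finset.mem_univ x)⟩)
      (fun a b hab => Subtype.ext (Equiv.Perm.SameCycle.cycleOf_eq ((eqvGen_iff_sameCycle σ a b).mp hab)))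
  have hFinj : Function.Injective F := by
    intro a b
    refine Quotient.inductionOn₂ a b ?_
    intro x y h
    have hxy : σ.cycleOf x = σ.cycleOf y := congrArg Subtype.val h
    have hsc : σ.SameCycle x y := by
      have hy : y ∈ (σ.cycleOf y).support :=
        Equiv.Perm.mem_support_cycleOf_iff.mpr
          ⟨Equiv.Perm.SameCycle.refl _ _, by rw [hsupp]; exact Finset.mem_univ y⟩
      rw [← hxy] at hy
      exact (Equiv.Perm.mem_support_cycleOf_iff.mp hy).1
    exact Quotient.sound ((eqvGen_iff_sameCycle σ x y).mpr hsc)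
  have hFsurj : Function.Surjective F := by
    rintro ⟨c, hc⟩
    have hcyc : c.IsCycle := (Equiv.Perm.mem_cycleFactorsFinset_iff.mp hc).1
    obtain ⟨x, hx, -⟩ := hcyc
    refine ⟨Quotient.mk st x, ?_⟩
    exact Subtype.ext (Equiv.Perm.cycle_is_cycleOf (Equiv.Perm.mem_support.mpr hx) hc).symm
  have hcardQ : Fintype.card (Quotient st) = σ.cycleFactorsFinset.card := by
    rw [Fintype.card_congr (Equiv.ofBijective F ⟨hFinj, hFsurj⟩), Fintype.card_coe]
  -- cycle type facts for σ
  have ctσ_card : Multiset.card σ.cycleType = σ.cycleFactorsFinset.card := by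
    rw [Equiv.Perm.cycleType_def, Multiset.card_map]
    rfl
  have ctσ_sum : σ.cycleType.sum = 2*m := by
    rw [Equiv.Perm.sum_cycleType, hsupp]
    simp
  -- cycle type facts for μ
  have hsuppμ : μ.support = Finset.univ := by
    ext v; simp [Equiv.Perm.mem_support, hμne v]
  have h2μ : μ ^ (2:ℤ) = 1 := by
    ext i
    rw [show (2:ℤ) = 1 + 1 from rfl, zpow_add, zpow_one]
    simp [Equiv.Perm.mul_apply, hμ2]
  have hfac2 : ∀ c ∈ μ.cycleFactorsFinset, (c.support).card = 2 := by
    intro c hc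
    have hcyc : c.IsCycle := (Equiv.Perm.mem_cycleFactorsFinset_iff.mp hc).1
    have hge := hcyc.two_le_card_support
    obtain ⟨x, hx, -⟩ := hcyc
    have hcx : c = μ.cycleOf x := Equiv.Perm.cycle_is_cycleOf (Equiv.Perm.mem_support.mpr hx) hc
    have hsub : c.support ⊆ {x, μ x} := by
      intro y hy
      rw [hcx] at hy
      obtain ⟨n, hn⟩ := (Equiv.Perm.mem_support_cycleOf_iff.mp hy).1
      have hpow : μ ^ n = 1 ∨ μ ^ n = μ := by
        rcases Int.even_or_odd n with ⟨t, ht⟩ | ⟨t, ht⟩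
        · left
          have : n = 2 * t := by omega
          rw [this, zpow_mul, h2μ, one_zpow]
        · right
          rw [ht, zpow_add, zpow_mul, h2μ, one_zpow, zpow_one, one_mul]
      rcases hpow with hp | hp
      · rw [hp] at hn
        simp only [Equiv.Perm.coe_one, id_eq] at hn
        subst hn
        exact Finset.mem_insert_self _ _
      · rw [hp] at hn
        subst hn
        exact Finset.mem_insert_of_mem (Finset.mem_singleton_self _)
    have hle : c.support.card ≤ 2 := by
      calc c.support.card ≤ ({x, μ x} : Finset _).card := Finset.card_le_card hsub
      _ ≤ 2 := by
        refine (Finset.card_insert_le _ _).trans ?_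
        simp
    omega
  have hct2 : ∀ n ∈ μ.cycleType, n = 2 := by
    intro n hn
    rw [Equiv.Perm.cycleType_def, Multiset.mem_map] at hn
    obtain ⟨c, hc, rfl⟩ := hn
    exact hfac2 c hc
  have hctsumμ : μ.cycleType.sum = 2*m := by
    rw [Equiv.Perm.sum_cycleType, hsuppμ]
    simp
  have hctcardμ : Multiset.card μ.cycleType = m := by
    have hrep := Multiset.eq_replicate_of_mem hct2
    rw [hrep, Multiset.sum_replicate, smul_eq_mul] at hctsumμ
    omega
  -- sign computation
  have hsignμ : Equiv.Perm.sign μ = (-1:ℤˣ)^(2*m + m) := by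
    rw [Equiv.Perm.sign_of_cycleType, hctsumμ, hctcardμ]
  have hrot : Equiv.Perm.sign (finRotate (2*m)) = (-1:ℤˣ)^(2*m-1) := by
    obtain ⟨n, hn⟩ : ∃ n, 2*m = n+1 := ⟨2*m-1, by omega⟩
    rw [hn, sign_finRotate]
  have hsignσ : (-1:ℤˣ)^(2*m + σ.cycleFactorsFinset.card) = (-1:ℤˣ)^((2*m-1) + (2*m+m)) := by
    calc (-1:ℤˣ)^(2*m + σ.cycleFactorsFinset.card)
        = Equiv.Perm.sign σ := by rw [Equiv.Perm.sign_of_cycleType, ctσ_sum, ctσ_card]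
      _ = Equiv.Perm.sign (finRotate (2*m)) * Equiv.Perm.sign μ := by
          rw [hσdef, map_mul]
      _ = (-1:ℤˣ)^(2*m-1) * (-1:ℤˣ)^(2*m+m) := by rw [hrot, hsignμ]
      _ = _ := (pow_add _ _ _).symm
  set r : ℕ := σ.cycleFactorsFinset.card with hr
  have heqZ : ((-1:ℤ))^(2*m + r) = (-1:ℤ)^((2*m-1) + (2*m+m)) := by
    have := congrArg (fun u : ℤˣ => (u : ℤ)) hsignσ
    simpa using this
  have hone : (-1:ℤ)^((2*m + r) + ((2*m-1) + (2*m+m))) = 1 := by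
    rw [pow_add, heqZ, ← pow_add]
    exact Even.neg_one_pow ⟨(2*m-1) + (2*m+m), rfl⟩
  have heven : Even ((2*m + r) + ((2*m-1) + (2*m+m))) := by
    by_contra hodd
    rw [(Nat.not_even_iff_odd.mp hodd).neg_one_pow] at hone
    norm_num at hone
  obtain ⟨t, ht⟩ := heven
  refine ⟨?_, ?_⟩
  · exact (numBoundary μ + 7*m - 1) / 2
  · rw [hnb, hcardQ]
    omega

/-- Every shadow of genus `g ≥ 1` (on `2m` vertices, hence with `m` arcs) has at
least `2g` and at most `6g-2` arcs; consequently for fixed `g ≥ 1` there are only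
finitely many shadows of genus `g`. -/
theorem shadow_arc_bounds_and_finiteness :
    (∀ (m : ℕ) (μ : Equiv.Perm (Fin (2 * m))), IsShadow μ → 1 ≤ diagGenus μ →
      2 * diagGenus μ ≤ m ∧ m ≤ 6 * diagGenus μ - 2) ∧
    (∀ g : ℕ, 1 ≤ g →
      Finite ((m : ℕ) × {μ : Equiv.Perm (Fin (2 * m)) // IsShadow μ ∧ diagGenus μ = g})) := by
  have main : ∀ (m : ℕ) (μ : Equiv.Perm (Fin (2 * m))), IsShadow μ → 1 ≤ diagGenus μ →
      2 * diagGenus μ ≤ m ∧ m ≤ 6 * diagGenus μ - 2 := by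
    intro m μ hsh hg
    have hdg : diagGenus μ = (2*m/2 + 1 - numBoundary μ)/2 := rfl
    rcases Nat.eq_zero_or_pos m with rfl | hm
    · exfalso
      haveI : IsEmpty (Quotient (Relation.EqvGen.setoid
          (fun x y : Fin (2*0) => finRotate (2*0) (μ x) = y))) :=
        ⟨fun q => Quotient.inductionOn q (fun x => x.elim0)⟩
      have h0 : numBoundary μ = 0 := by
        unfold numBoundary numOrbits
        exact Nat.card_of_isEmpty
      omega
    · obtain ⟨h1, h2, k, hk⟩ := shadow_key hm μ hsh
      omega
  refine ⟨main, ?_⟩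
  intro g hg
  have bound : ∀ x : ((m : ℕ) × {μ : Equiv.Perm (Fin (2 * m)) // IsShadow μ ∧ diagGenus μ = g}),
      x.1 < 6 * g := by
    rintro ⟨m, μ, hsh, hdg⟩
    have h1 : 1 ≤ diagGenus μ := by rw [hdg]; exact hg
    have := (main m μ hsh h1).2
    rw [hdg] at this
    show m < 6 * g
    omega
  let f : ((m : ℕ) × {μ : Equiv.Perm (Fin (2 * m)) // IsShadow μ ∧ diagGenus μ = g}) →
      ((i : Fin (6 * g)) × {μ : Equiv.Perm (Fin (2 * (i : ℕ))) // IsShadow μ ∧ diagGenus μ = g}) :=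
    fun x => ⟨⟨x.1, bound x⟩, x.2⟩
  have hf : Function.Injective f := by
    rintro ⟨m1, s1⟩ ⟨m2, s2⟩ h
    have h1 : m1 = m2 := congrArg (fun y => (y.1 : ℕ)) h
    subst h1
    simp only [f] at h
    injection h with ha hb
    rw [hb]
  exact Finite.of_injective f hf
end
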